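/- Let n ≥ 1 and p ≥ 1 be integers, and let ξ₁, …, ξ_p ∈ ℝⁿ with ξ = Σ_{j=1}^p ξ_j. Then | 1 − cosh|ξ| · ∏_{j=1}^p sech|ξ_j| | ≤ 2^p · Σ_{j ≠ k} |ξ_j| |ξ_k|, where the sum on the right is over all ordered pairs (j, k) with 1 ≤ j, k ≤ p and j ≠ k. -/

import Mathlib

open Finset

private lemma my_abs_sinh_le_cosh (x : ℝ) : |Real.sinh x| ≤ Real.cosh x := by
  rw [Real.abs_sinh, ← Real.cosh_abs]
  have := Real.cosh_sub_sinh |x|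
  have := Real.exp_pos (-|x|)
  linarith

private lemma my_sinh_le_mul_cosh {x : ℝ} (hx : 0 ≤ x) : Real.sinh x ≤ x * Real.cosh x := by
  have key : ∀ y : ℝ, HasDerivAt (fun t => t * Real.cosh t - Real.sinh t) (y * Real.sinh y) y := by
    intro y
    have h1 : HasDerivAt (fun t : ℝ => t * Real.cosh t)
        (1 * Real.cosh y + y * Real.sinh y) y :=
      (hasDerivAt_id y).mul (Real.hasDerivAt_cosh y)
    have h2 : HasDerivAt (fun t => t * Real.cosh t - Real.sinh t)
        (1 * Real.cosh y + y * Real.sinh y - Real.cosh y) y := h1.sub (Real.hasDerivAt_sinh y)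
    convert h2 using 1
    ring
  have mono : MonotoneOn (fun t => t * Real.cosh t - Real.sinh t) (Set.Ici (0:ℝ)) := by
    apply monotoneOn_of_deriv_nonneg (convex_Ici 0)
    · exact (Continuous.sub (continuous_id.mul Real.continuous_cosh)
        Real.continuous_sinh).continuousOn
    · intro y _
      exact (key y).differentiableAt.differentiableWithinAt
    · intro y hy
      rw [interior_Ici] at hy
      rw [(key y).deriv]
      exact mul_nonneg hy.le (Real.sinh_nonneg_iff.2 hy.le)
  have h0 := mono (Set.self_mem_Ici) (Set.mem_Ici.2 hx) hx
  simp only [Real.sinh_zero, Real.cosh_zero, mul_one, zero_mul, sub_zero] at h0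
  linarith

private lemma my_cosh_add_le (x y : ℝ) :
    Real.cosh (x + y) ≤ 2 * Real.cosh x * Real.cosh y := by
  rw [Real.cosh_add]
  have h1 : Real.sinh x * Real.sinh y ≤ |Real.sinh x| * |Real.sinh y| := by
    rw [← abs_mul]; exact le_abs_self _
  have h2 := my_abs_sinh_le_cosh x
  have h3 := my_abs_sinh_le_cosh y
  have h4 : (0:ℝ) ≤ |Real.sinh x| := abs_nonneg _
  have h5 : (0:ℝ) ≤ |Real.sinh y| := abs_nonneg _
  nlinarith [Real.cosh_pos x, Real.cosh_pos y]

/-- cosh of a sum is at most `2^card` times the product of cosh's. -/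
private lemma my_cosh_sum_le {ι : Type*} [DecidableEq ι] (s : Finset ι) (a : ι → ℝ) :
    Real.cosh (∑ j ∈ s, a j) ≤ 2 ^ s.card * ∏ j ∈ s, Real.cosh (a j) := by
  induction s using Finset.induction with
  | empty => simp
  | insert _ _ ha ih =>
    rename_i x s
    rw [Finset.sum_insert ha, Finset.prod_insert ha, Finset.card_insert_of_notMem ha]
    calc Real.cosh (a x + ∑ j ∈ s, a j)
        ≤ 2 * Real.cosh (a x) * Real.cosh (∑ j ∈ s, a j) := my_cosh_add_le _ _
      _ ≤ 2 * Real.cosh (a x) * (2 ^ s.card * ∏ j ∈ s, Real.cosh (a j)) := by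
          apply mul_le_mul_of_nonneg_left ih
          positivity
      _ = 2 ^ (s.card + 1) * (Real.cosh (a x) * ∏ j ∈ s, Real.cosh (a j)) := by ring

/-- two-term cross estimate in the reals. -/
private lemma my_cross {a b c : ℝ} (ha : 0 ≤ a) (hb : 0 ≤ b)
    (hc1 : |a - b| ≤ c) (hc2 : c ≤ a + b) :
    |Real.cosh a * Real.cosh b - Real.cosh c| ≤ a * b * (Real.cosh a * Real.cosh b) := by
  have hc0 : 0 ≤ c := le_trans (abs_nonneg _) hc1
  have e1 : Real.cosh (a + b) = Real.cosh a * Real.cosh b + Real.sinh a * Real.sinh b :=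
    Real.cosh_add a b
  have e2 : Real.cosh (a - b) = Real.cosh a * Real.cosh b - Real.sinh a * Real.sinh b :=
    Real.cosh_sub a b
  have h1 : Real.cosh (a - b) ≤ Real.cosh c :=
    Real.cosh_le_cosh.2 (by rwa [abs_of_nonneg hc0])
  have h2 : Real.cosh c ≤ Real.cosh (a + b) :=
    Real.cosh_le_cosh.2 (by
      rw [abs_of_nonneg hc0, abs_of_nonneg (by linarith : (0:ℝ) ≤ a + b)]
      exact hc2)
  have hsa : Real.sinh a ≤ a * Real.cosh a := my_sinh_le_mul_cosh ha
  have hsb : Real.sinh b ≤ b * Real.cosh b := my_sinh_le_mul_cosh hb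
  have hsa0 : 0 ≤ Real.sinh a := Real.sinh_nonneg_iff.2 ha
  have hsb0 : 0 ≤ Real.sinh b := Real.sinh_nonneg_iff.2 hb
  have hprod : Real.sinh a * Real.sinh b ≤ a * b * (Real.cosh a * Real.cosh b) := by
    have := mul_le_mul hsa hsb hsb0 (mul_nonneg ha (Real.cosh_pos a).le)
    nlinarith
  rw [abs_le]
  constructor <;> nlinarith

/-- main induction: `|∏ cosh‖f j‖ − cosh‖∑ f j‖| ≤ S · cosh (∑ ‖f j‖)`. -/
private lemma my_main {ι E : Type*} [DecidableEq ι] [SeminormedAddCommGroup E] (s : Finset ι) (f : ι → E) :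
    |(∏ j ∈ s, Real.cosh ‖f j‖) - Real.cosh ‖∑ j ∈ s, f j‖|
      ≤ (∑ j ∈ s, ∑ k ∈ s.erase j, ‖f j‖ * ‖f k‖) * Real.cosh (∑ j ∈ s, ‖f j‖) := by
  induction s using Finset.induction with
  | empty => simp
  | insert _ _ ha ih =>
    rename_i x s
    rw [Finset.sum_insert ha, Finset.prod_insert ha, Finset.sum_insert ha, Finset.sum_insert ha]
    set a : ℝ := ‖f x‖ with ha'
    set P : ℝ := ∏ j ∈ s, Real.cosh ‖f j‖ with hP
    set σ : E := ∑ j ∈ s, f j with hσ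
    set A : ℝ := ∑ j ∈ s, ‖f j‖ with hA
    set S : ℝ := ∑ j ∈ s, ∑ k ∈ s.erase j, ‖f j‖ * ‖f k‖ with hS
    -- compute the new double sum
    have hSnew : (∑ k ∈ (insert x s).erase x, ‖f x‖ * ‖f k‖)
        + ∑ j ∈ s, ∑ k ∈ (insert x s).erase j, ‖f j‖ * ‖f k‖ = a * A + (a * A + S) := by
      rw [Finset.erase_insert ha]
      have h2 : ∀ j ∈ s, ∑ k ∈ (insert x s).erase j, ‖f j‖ * ‖f k‖
          = ‖f j‖ * ‖f x‖ + ∑ k ∈ s.erase j, ‖f j‖ * ‖f k‖ := by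
        intro j hj
        rw [Finset.erase_insert_of_ne (ne_of_mem_of_not_mem hj ha).symm, Finset.sum_insert
          (fun h => ha (Finset.mem_of_mem_erase h))]
      have e3 : ∑ k ∈ s, ‖f x‖ * ‖f k‖ = a * A := by
        rw [← Finset.mul_sum, ← hA, ← ha']
      have e4 : ∑ j ∈ s, ‖f j‖ * ‖f x‖ = a * A := by
        rw [← Finset.sum_mul, ← hA, ← ha', mul_comm]
      rw [Finset.sum_congr rfl h2]
      simp only [Finset.sum_add_distrib]
      rw [e3, e4, ← hS]
    rw [hSnew]
    -- basic facts
    have hA0 : 0 ≤ A := Finset.sum_nonneg fun _ _ => norm_nonneg _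
    have ha0 : 0 ≤ a := norm_nonneg _
    have hσA : ‖σ‖ ≤ A := norm_sum_le _ _
    have hS0 : 0 ≤ S := Finset.sum_nonneg fun j _ =>
      Finset.sum_nonneg fun k _ => mul_nonneg (norm_nonneg _) (norm_nonneg _)
    have hcσA : Real.cosh ‖σ‖ ≤ Real.cosh A :=
      Real.cosh_le_cosh.2 (by
        rwa [abs_of_nonneg (norm_nonneg _), abs_of_nonneg hA0])
    have hcaA : Real.cosh a * Real.cosh A ≤ Real.cosh (a + A) := by
      rw [Real.cosh_add]
      nlinarith [Real.sinh_nonneg_iff.2 ha0, Real.sinh_nonneg_iff.2 hA0]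
    have hca1 : (1:ℝ) ≤ Real.cosh a := Real.one_le_cosh a
    have hcA1 : (1:ℝ) ≤ Real.cosh A := Real.one_le_cosh A
    -- triangle
    have tri : |Real.cosh a * P - Real.cosh ‖f x + σ‖|
        ≤ Real.cosh a * |P - Real.cosh ‖σ‖|
          + |Real.cosh a * Real.cosh ‖σ‖ - Real.cosh ‖f x + σ‖| := by
      have : Real.cosh a * P - Real.cosh ‖f x + σ‖
          = Real.cosh a * (P - Real.cosh ‖σ‖)
            + (Real.cosh a * Real.cosh ‖σ‖ - Real.cosh ‖f x + σ‖) := by ring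
      rw [this]
      refine le_trans (abs_add_le _ _) ?_
      rw [abs_mul, abs_of_pos (Real.cosh_pos a)]
    have cross : |Real.cosh a * Real.cosh ‖σ‖ - Real.cosh ‖f x + σ‖|
        ≤ a * ‖σ‖ * (Real.cosh a * Real.cosh ‖σ‖) := by
      refine my_cross ha0 (norm_nonneg _) ?_ ?_
      · have := abs_norm_sub_norm_le (f x) (-σ)
        rw [norm_neg, sub_neg_eq_add] at this
        exact this
      · exact norm_add_le _ _
    have hcross2 : a * ‖σ‖ * (Real.cosh a * Real.cosh ‖σ‖)
        ≤ a * A * Real.cosh (a + A) := by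
      have h1 : Real.cosh a * Real.cosh ‖σ‖ ≤ Real.cosh (a + A) := by
        calc Real.cosh a * Real.cosh ‖σ‖ ≤ Real.cosh a * Real.cosh A :=
              mul_le_mul_of_nonneg_left hcσA (Real.cosh_pos a).le
          _ ≤ Real.cosh (a + A) := hcaA
      have h2 : a * ‖σ‖ ≤ a * A := mul_le_mul_of_nonneg_left hσA ha0
      have := mul_le_mul h2 h1 (by positivity) (mul_nonneg ha0 hA0)
      linarith
    have hih2 : Real.cosh a * |P - Real.cosh ‖σ‖| ≤ S * Real.cosh (a + A) := by
      calc Real.cosh a * |P - Real.cosh ‖σ‖| ≤ Real.cosh a * (S * Real.cosh A) :=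
            mul_le_mul_of_nonneg_left ih (Real.cosh_pos a).le
        _ = S * (Real.cosh a * Real.cosh A) := by ring
        _ ≤ S * Real.cosh (a + A) := mul_le_mul_of_nonneg_left hcaA hS0
    have hchpos : 0 < Real.cosh (a + A) := Real.cosh_pos _
    calc |Real.cosh a * P - Real.cosh ‖f x + σ‖|
        ≤ S * Real.cosh (a + A) + a * A * Real.cosh (a + A) := by
          have := le_trans cross hcross2
          linarith [tri, hih2]
      _ ≤ (a * A + (a * A + S)) * Real.cosh (a + A) := by
          nlinarith [mul_nonneg (mul_nonneg ha0 hA0) hchpos.le]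

/-- Key multiplier estimate (Lemma 4.2): for `ξ = Σ_{j=1}^p ξ_j` in `ℝⁿ`,
`|1 − cosh|ξ| ∏_{j=1}^p sech|ξ_j|| ≤ 2^p Σ_{j≠k} |ξ_j||ξ_k|` (sum over ordered pairs
`(j,k)` with `j ≠ k`), where `sech r = (cosh r)⁻¹`. -/
theorem one_sub_cosh_prod_sech_le (n p : ℕ) (hn : 1 ≤ n) (hp : 1 ≤ p)
    (ξ : Fin p → EuclideanSpace ℝ (Fin n)) :
    |1 - Real.cosh ‖∑ j, ξ j‖ * ∏ j, (Real.cosh ‖ξ j‖)⁻¹|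
      ≤ 2 ^ p * ∑ j, ∑ k ∈ Finset.univ.erase j, ‖ξ j‖ * ‖ξ k‖ := by
  set P : ℝ := ∏ j, Real.cosh ‖ξ j‖ with hP
  have hPpos : 0 < P := Finset.prod_pos fun j _ => Real.cosh_pos _
  have hinv : (∏ j, (Real.cosh ‖ξ j‖)⁻¹) = P⁻¹ := by
    rw [hP, ← Finset.prod_inv_distrib]
  set c : ℝ := Real.cosh ‖∑ j, ξ j‖ with hc
  set S : ℝ := ∑ j, ∑ k ∈ Finset.univ.erase j, ‖ξ j‖ * ‖ξ k‖ with hS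
  have hS0 : 0 ≤ S := Finset.sum_nonneg fun j _ =>
    Finset.sum_nonneg fun k _ => mul_nonneg (norm_nonneg _) (norm_nonneg _)
  have hmain : |P - c| ≤ S * Real.cosh (∑ j, ‖ξ j‖) :=
    my_main Finset.univ ξ
  have hcoshA : Real.cosh (∑ j, ‖ξ j‖) ≤ 2 ^ p * P := by
    have := my_cosh_sum_le Finset.univ (fun j => ‖ξ j‖)
    simpa [Finset.card_univ] using this
  have heq : 1 - c * P⁻¹ = (P - c) / P := by field_simp
  have h1 : |1 - c * P⁻¹| = |P - c| / P := by
    rw [heq, abs_div, abs_of_pos hPpos]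
  rw [hinv, h1, div_le_iff₀ hPpos]
  calc |P - c| ≤ S * Real.cosh (∑ j, ‖ξ j‖) := hmain
    _ ≤ S * (2 ^ p * P) := mul_le_mul_of_nonneg_left hcoshA hS0
    _ = 2 ^ p * S * P := by ring
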